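/- Let x₀(t) = σ√2·sech(t) with σ ∈ {+1, −1}, the parametrization of the right (σ = +1) or left (σ = −1) homoclinic loop of ẍ − x + x³ = 0, and let ẋ₀ denote its derivative. Then for all p₁, p₂ ∈ ℝ the autonomous Melnikov integral satisfies ∫_{−∞}^{∞} ẋ₀(t)²·(p₁ + p₂·x₀(t) − x₀(t)²) dt = 2·( (2/3)p₁ + σ·(√2π/8)p₂ − 8/15 ). -/

import Mathlib

open Real Filter Topology MeasureTheory

/-- Parametrization of the right (σ = +1) or left (σ = −1) homoclinic loop of
ẍ − x + x³ = 0: x₀(t) = σ√2·sech(t). -/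
noncomputable def xhom (σ : ℝ) (t : ℝ) : ℝ := σ * Real.sqrt 2 * (1 / Real.cosh t)

/-- The pointwise value of the Melnikov integrand, written in sinh/cosh form. -/
noncomputable def melG (σ p₁ p₂ t : ℝ) : ℝ :=
  2*p₁*Real.sinh t^2/Real.cosh t^4 + 2*Real.sqrt 2*σ*p₂*Real.sinh t^2/Real.cosh t^5
    - 4*Real.sinh t^2/Real.cosh t^6

/-- An explicit antiderivative of the Melnikov integrand. -/
noncomputable def melF (σ p₁ p₂ t : ℝ) : ℝ :=
  2*p₁*(Real.sinh t/Real.cosh t)^3/3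
  + 2*Real.sqrt 2*σ*p₂*((Real.sinh t/Real.cosh t)*(Real.cosh t)⁻¹/8 + Real.arctan (Real.sinh t)/8
      - (Real.sinh t/Real.cosh t)*((Real.cosh t)⁻¹)^3/4)
  - 4*((Real.sinh t/Real.cosh t)^3/3 - (Real.sinh t/Real.cosh t)^5/5)

lemma melF_deriv (σ p₁ p₂ t : ℝ) : HasDerivAt (melF σ p₁ p₂) (melG σ p₁ p₂ t) t := by
  have hc0 : Real.cosh t ≠ 0 := (Real.cosh_pos t).ne'
  have hq := (Real.hasDerivAt_sinh t).div (Real.hasDerivAt_cosh t) hc0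
  have hinv := (Real.hasDerivAt_cosh t).inv hc0
  have harc := (Real.hasDerivAt_arctan (Real.sinh t)).comp t (Real.hasDerivAt_sinh t)
  have h1 := ((hq.pow 3).const_mul (2*p₁)).div_const 3
  have h2a := (hq.mul hinv).div_const 8
  have h2b := harc.div_const 8
  have h2c := (hq.mul (hinv.pow 3)).div_const 4
  have h2 := ((h2a.add h2b).sub h2c).const_mul (2*Real.sqrt 2*σ*p₂)
  have h3 := (((hq.pow 3).div_const 3).sub ((hq.pow 5).div_const 5)).const_mul 4
  have H := (h1.add h2).sub h3
  unfold melF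
  refine H.congr_deriv ?_
  symm
  unfold melG
  have hid : Real.cosh t ^ 2 - Real.sinh t ^ 2 = 1 := Real.cosh_sq_sub_sinh_sq t
  have h1s : 1 + Real.sinh t ^ 2 = Real.cosh t ^ 2 := by linarith
  rw [h1s]
  simp only [Pi.div_apply, Pi.inv_apply, Pi.pow_apply, Nat.cast_ofNat, Nat.reduceSub]
  field_simp
  have hs : Real.sinh t ^ 2 = Real.cosh t ^ 2 - 1 := by linarith
  ring_nf
  simp only [show Real.sinh t ^ 4 = (Real.sinh t ^ 2) ^ 2 by ring,
    show Real.sinh t ^ 6 = (Real.sinh t ^ 2) ^ 3 by ring, hs]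
  ring

lemma xhom_hasDeriv (σ t : ℝ) :
    HasDerivAt (xhom σ) (σ * Real.sqrt 2 * (-Real.sinh t / Real.cosh t ^ 2)) t := by
  have hc0 : Real.cosh t ≠ 0 := (Real.cosh_pos t).ne'
  have h := ((Real.hasDerivAt_cosh t).inv hc0).const_mul (σ * Real.sqrt 2)
  unfold xhom
  simp only [one_div]
  exact h

lemma integrand_eq (σ : ℝ) (hσ : σ = 1 ∨ σ = -1) (p₁ p₂ t : ℝ) :
    (deriv (xhom σ) t) ^ 2 * (p₁ + p₂ * xhom σ t - (xhom σ t) ^ 2) = melG σ p₁ p₂ t := by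
  rw [(xhom_hasDeriv σ t).deriv]
  unfold xhom melG
  have hσ2 : σ ^ 2 = 1 := by rcases hσ with rfl|rfl <;> norm_num
  have h2 : Real.sqrt 2 ^ 2 = 2 := Real.sq_sqrt (by norm_num)
  have hc0 : Real.cosh t ≠ 0 := (Real.cosh_pos t).ne'
  field_simp
  linear_combination (σ^2*(Real.sinh t^2*(Real.cosh t*(Real.cosh t*p₁ + σ*Real.sqrt 2*p₂)
      - σ^2*Real.sqrt 2^2 - 2))) * h2
    + (2*(Real.sinh t^2*(Real.cosh t*(Real.cosh t*p₁ + σ*Real.sqrt 2*p₂)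
      - σ^2*Real.sqrt 2^2 - 2))) * hσ2

lemma melG_integrable (σ p₁ p₂ : ℝ) : Integrable (melG σ p₁ p₂) := by
  have hc0 : ∀ t, Real.cosh t ≠ 0 := fun t => (Real.cosh_pos t).ne'
  have hcont : Continuous (melG σ p₁ p₂) := by
    unfold melG
    exact (((continuous_const.mul (Real.continuous_sinh.pow 2)).div (Real.continuous_cosh.pow 4)
        (fun t => pow_ne_zero _ (hc0 t))).add
      ((continuous_const.mul (Real.continuous_sinh.pow 2)).div (Real.continuous_cosh.pow 5)
        (fun t => pow_ne_zero _ (hc0 t)))).sub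
      ((continuous_const.mul (Real.continuous_sinh.pow 2)).div (Real.continuous_cosh.pow 6)
        (fun t => pow_ne_zero _ (hc0 t)))
  set C : ℝ := 2*|p₁| + 2*Real.sqrt 2*|σ| * |p₂| + 4 with hC
  have hbound : ∀ t, ‖melG σ p₁ p₂ t‖ ≤ C * (1 + t^2)⁻¹ := by
    intro t
    set s := Real.sinh t
    set c := Real.cosh t with hc
    have hc1 : 1 ≤ c := Real.one_le_cosh t
    have hcp : (0:ℝ) < c := lt_of_lt_of_le one_pos hc1
    have hid : c^2 - s^2 = 1 := Real.cosh_sq_sub_sinh_sq t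
    have h1 : |t| ≤ |s| := by rw [Real.abs_sinh]; exact Real.self_le_sinh_iff.mpr (abs_nonneg t)
    have hts : t^2 ≤ s^2 := by
      calc t^2 = |t|^2 := (sq_abs t).symm
        _ ≤ |s|^2 := pow_le_pow_left₀ (abs_nonneg t) h1 2
        _ = s^2 := sq_abs s
    have hI : 1 + t^2 ≤ c^2 := by nlinarith
    have hIpos : (0:ℝ) < 1 + t^2 := by positivity
    have hs2c2 : s^2 ≤ c^2 := by nlinarith
    have b1 : s^2/c^4 ≤ (1 + t^2)⁻¹ := by
      rw [inv_eq_one_div, div_le_div_iff₀ (by positivity) hIpos]; nlinarith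
    have b2 : s^2/c^5 ≤ (1 + t^2)⁻¹ := by
      rw [inv_eq_one_div, div_le_div_iff₀ (by positivity) hIpos]
      nlinarith [pow_le_pow_right₀ hc1 (show 4 ≤ 5 by norm_num)]
    have b3 : s^2/c^6 ≤ (1 + t^2)⁻¹ := by
      rw [inv_eq_one_div, div_le_div_iff₀ (by positivity) hIpos]
      nlinarith [pow_le_pow_right₀ hc1 (show 4 ≤ 6 by norm_num)]
    have eA : |2*p₁*s^2/c^4| = 2*|p₁| * (s^2/c^4) := by
      rw [abs_div, abs_mul, abs_mul, abs_two, abs_of_nonneg (sq_nonneg s),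
        abs_of_pos (by positivity : (0:ℝ) < c^4)]; ring
    have eB : |2*Real.sqrt 2*σ*p₂*s^2/c^5| = 2*Real.sqrt 2*|σ| * |p₂| * (s^2/c^5) := by
      rw [abs_div, abs_mul, abs_mul, abs_mul, abs_mul, abs_two,
        abs_of_nonneg (Real.sqrt_nonneg 2), abs_of_nonneg (sq_nonneg s),
        abs_of_pos (by positivity : (0:ℝ) < c^5)]; ring
    have eC : |4*s^2/c^6| = 4*(s^2/c^6) := by
      rw [abs_div, abs_mul, abs_of_nonneg (sq_nonneg s),
        abs_of_pos (by positivity : (0:ℝ) < c^6),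
        show |(4:ℝ)| = 4 from abs_of_pos (by norm_num)]; ring
    have htri : ‖melG σ p₁ p₂ t‖ ≤ |2*p₁*s^2/c^4| + |2*Real.sqrt 2*σ*p₂*s^2/c^5| + |4*s^2/c^6| := by
      unfold melG
      calc |2*p₁*s^2/c^4 + 2*Real.sqrt 2*σ*p₂*s^2/c^5 - 4*s^2/c^6|
          ≤ |2*p₁*s^2/c^4 + 2*Real.sqrt 2*σ*p₂*s^2/c^5| + |4*s^2/c^6| := abs_sub _ _
        _ ≤ |2*p₁*s^2/c^4| + |2*Real.sqrt 2*σ*p₂*s^2/c^5| + |4*s^2/c^6| := by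
            gcongr; exact abs_add_le _ _
    rw [eA, eB, eC] at htri
    have m1 : 2*|p₁| * (s^2/c^4) ≤ 2*|p₁| * (1+t^2)⁻¹ :=
      mul_le_mul_of_nonneg_left b1 (by positivity)
    have m2 : 2*Real.sqrt 2*|σ| * |p₂| * (s^2/c^5) ≤ 2*Real.sqrt 2*|σ| * |p₂| * (1+t^2)⁻¹ :=
      mul_le_mul_of_nonneg_left b2 (by positivity)
    have m3 : 4*(s^2/c^6) ≤ 4*(1+t^2)⁻¹ := mul_le_mul_of_nonneg_left b3 (by positivity)
    calc ‖melG σ p₁ p₂ t‖ ≤ 2*|p₁| * (1+t^2)⁻¹ + 2*Real.sqrt 2*|σ| * |p₂| * (1+t^2)⁻¹ + 4*(1+t^2)⁻¹ := by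
          linarith
      _ = C * (1 + t^2)⁻¹ := by rw [hC]; ring
  exact (integrable_inv_one_add_sq.const_mul C).mono' hcont.aestronglyMeasurable
    (Eventually.of_forall hbound)

lemma tendsto_sinh_top : Tendsto Real.sinh atTop atTop :=
  tendsto_atTop_mono' atTop (by
    filter_upwards [eventually_ge_atTop (0:ℝ)] with x hx using Real.self_le_sinh_iff.mpr hx)
    tendsto_id

lemma tendsto_sinh_bot : Tendsto Real.sinh atBot atBot :=
  tendsto_atBot_mono' atBot (by
    filter_upwards [eventually_le_atBot (0:ℝ)] with x hx using Real.sinh_le_self_iff.mpr hx)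
    tendsto_id

lemma tendsto_cosh_top : Tendsto Real.cosh atTop atTop :=
  tendsto_atTop_mono (fun x => (Real.sinh_lt_cosh x).le) tendsto_sinh_top

lemma tendsto_cosh_bot : Tendsto Real.cosh atBot atTop := by
  have hneg : Tendsto (fun x => -Real.sinh x) atBot atTop :=
    tendsto_neg_atBot_atTop.comp tendsto_sinh_bot
  refine tendsto_atTop_mono (fun x => ?_) hneg
  have := (Real.sinh_lt_cosh (-x)).le
  rwa [Real.sinh_neg, Real.cosh_neg] at this

lemma tanh_id (t : ℝ) : Real.sinh t / Real.cosh t = 1 - 2 / (Real.exp (2*t) + 1) := by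
  have h1 : Real.exp (2*t) = Real.exp t * Real.exp t := by rw [two_mul, Real.exp_add]
  have h2 : (Real.cosh t) ≠ 0 := (Real.cosh_pos t).ne'
  have h3 : Real.exp (2*t) + 1 ≠ 0 := by positivity
  have h4 := Real.exp_ne_zero t
  rw [Real.sinh_eq, Real.cosh_eq]
  rw [h1] at h3 ⊢
  rw [Real.cosh_eq] at h2
  rw [Real.exp_neg] at h2 ⊢
  field_simp
  ring

lemma tendsto_tanh_top : Tendsto (fun t => Real.sinh t / Real.cosh t) atTop (𝓝 1) := by
  simp only [tanh_id]
  have he : Tendsto (fun t : ℝ => Real.exp (2*t) + 1) atTop atTop :=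
    tendsto_atTop_add_const_right _ 1 (Real.tendsto_exp_atTop.comp (tendsto_id.const_mul_atTop two_pos))
  have : Tendsto (fun t : ℝ => 2 / (Real.exp (2*t) + 1)) atTop (𝓝 0) :=
    tendsto_const_nhds.div_atTop he
  simpa using tendsto_const_nhds.sub this

lemma tendsto_tanh_bot : Tendsto (fun t => Real.sinh t / Real.cosh t) atBot (𝓝 (-1)) := by
  simp only [tanh_id]
  have he : Tendsto (fun t : ℝ => Real.exp (2*t) + 1) atBot (𝓝 1) := by
    have : Tendsto (fun t : ℝ => Real.exp (2*t)) atBot (𝓝 0) :=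
      Real.tendsto_exp_atBot.comp (tendsto_id.const_mul_atBot two_pos)
    simpa using this.add tendsto_const_nhds
  have : Tendsto (fun t : ℝ => 2 / (Real.exp (2*t) + 1)) atBot (𝓝 2) := by
    have := (tendsto_const_nhds (x := (2:ℝ))).div he one_ne_zero
    rw [div_one] at this
    exact this
  have h2 := tendsto_const_nhds (x := (1:ℝ)) |>.sub this
  norm_num at h2
  exact h2

lemma melF_top (σ p₁ p₂ : ℝ) :
    Tendsto (melF σ p₁ p₂) atTop (𝓝 (2*p₁/3 + Real.sqrt 2*σ*p₂*Real.pi/8 - 8/15)) := by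
  have hq := tendsto_tanh_top
  have hv : Tendsto (fun t => (Real.cosh t)⁻¹) atTop (𝓝 0) :=
    tendsto_cosh_top.inv_tendsto_atTop
  have ha : Tendsto (fun t => Real.arctan (Real.sinh t)) atTop (𝓝 (Real.pi/2)) :=
    (tendsto_nhds_of_tendsto_nhdsWithin Real.tendsto_arctan_atTop).comp tendsto_sinh_top
  have H := (((Tendsto.const_mul (2*p₁) (hq.pow 3)).div_const 3).add
      (Tendsto.const_mul (2*Real.sqrt 2*σ*p₂) ((((hq.mul hv).div_const 8).add (ha.div_const 8)).sub
        ((hq.mul (hv.pow 3)).div_const 4)))).sub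
    (Tendsto.const_mul 4 (((hq.pow 3).div_const 3).sub ((hq.pow 5).div_const 5)))
  unfold melF
  convert H using 2
  ring

lemma melF_bot (σ p₁ p₂ : ℝ) :
    Tendsto (melF σ p₁ p₂) atBot (𝓝 (-(2*p₁/3) - Real.sqrt 2*σ*p₂*Real.pi/8 + 8/15)) := by
  have hq := tendsto_tanh_bot
  have hv : Tendsto (fun t => (Real.cosh t)⁻¹) atBot (𝓝 0) :=
    tendsto_cosh_bot.inv_tendsto_atTop
  have ha : Tendsto (fun t => Real.arctan (Real.sinh t)) atBot (𝓝 (-(Real.pi/2))) :=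
    (tendsto_nhds_of_tendsto_nhdsWithin Real.tendsto_arctan_atBot).comp tendsto_sinh_bot
  have H := (((Tendsto.const_mul (2*p₁) (hq.pow 3)).div_const 3).add
      (Tendsto.const_mul (2*Real.sqrt 2*σ*p₂) ((((hq.mul hv).div_const 8).add (ha.div_const 8)).sub
        ((hq.mul (hv.pow 3)).div_const 4)))).sub
    (Tendsto.const_mul 4 (((hq.pow 3).div_const 3).sub ((hq.pow 5).div_const 5)))
  unfold melF
  convert H using 2
  ring

/-- The autonomous Melnikov integral along the homoclinic loop:
∫ ẋ₀²·(p₁ + p₂x₀ − x₀²) dt = 2·((2/3)p₁ + σ(√2π/8)p₂ − 8/15). -/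
theorem melnikov_autonomous (σ : ℝ) (hσ : σ = 1 ∨ σ = -1) (p₁ p₂ : ℝ) :
    ∫ t : ℝ, (deriv (xhom σ) t) ^ 2 * (p₁ + p₂ * xhom σ t - (xhom σ t) ^ 2)
      = 2 * ((2/3) * p₁ + σ * (Real.sqrt 2 * Real.pi / 8) * p₂ - 8/15) := by
  simp only [integrand_eq σ hσ p₁ p₂]
  rw [MeasureTheory.integral_of_hasDerivAt_of_tendsto (melF_deriv σ p₁ p₂)
    (melG_integrable σ p₁ p₂) (melF_bot σ p₁ p₂) (melF_top σ p₁ p₂)]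
  ring
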